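/- The image coloring argument for Hales-Jewett: let (S,+) be a commutative semigroup, let f_1,…,f_n : ℕ → S be sequences, and let A ⊆ S be such that there exist b ∈ S, a finite set E = {t_1,…,t_r} ⊆ S with b + ∑_{i=1}^N f_{a_i}(i) ∈ ⋃_{j=1}^r (-t_j + A) for all (a_1,…,a_N) ∈ [n]^N, where N is at least the Hales-Jewett number HJ(r,n). Then there exist s ∈ S and a finite nonempty H ⊆ {1,…,N} such that s + ∑_{t∈H} f_i(t) ∈ A for all i ∈ {1,…,n}. -/

import Mathlib

/-- Fold of addition along a list, starting from `a` (no identity needed). -/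
def addChain {S : Type*} [Add S] : S → List S → S
  | a, [] => a
  | a, b :: l => addChain (a + b) l

/-- The sum `∑ t ∈ H, f t` in an additive commutative semigroup (junk value `f 0`
for `H = ∅`; we only use it for nonempty `H`). -/
def finSum {S : Type*} [AddCommSemigroup S] (f : ℕ → S) (H : Finset ℕ) : S :=
  match H.sort (· ≤ ·) with
  | [] => f 0
  | a :: l => addChain (f a) (l.map f)

lemma addChain_coe {S : Type*} [AddCommSemigroup S] (a : S) (l : List S) :
    ((addChain a l : S) : WithZero S)
      = (a : WithZero S) + (l.map (fun x : S => (x : WithZero S))).sum := by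
  induction l generalizing a with
  | nil => simp [addChain]
  | cons x xs ih =>
    simp only [addChain, ih, List.map_cons, List.sum_cons, ← WithZero.coe_add]
    rw [WithZero.coe_add, add_assoc]

lemma finSum_coe {S : Type*} [AddCommSemigroup S] (f : ℕ → S) (H : Finset ℕ)
    (hH : H.Nonempty) :
    ((finSum f H : S) : WithZero S) = ∑ t ∈ H, ((f t : S) : WithZero S) := by
  have hsum : ∑ t ∈ H, ((f t : S) : WithZero S)
      = ((H.sort (· ≤ ·)).map (fun t => ((f t : S) : WithZero S))).sum := by
    rw [Finset.sum, ← Finset.sort_eq H (· ≤ ·), Multiset.map_coe, Multiset.sum_coe]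
  rcases h : H.sort (· ≤ ·) with _ | ⟨a, lt⟩
  · exfalso
    have := Finset.length_sort (α := ℕ) (· ≤ ·) (s := H)
    rw [h] at this
    simp only [List.length_nil] at this
    exact absurd this.symm hH.card_pos.ne'
  · unfold finSum
    rw [h]
    simp only [addChain_coe, hsum, h, List.map_cons, List.sum_cons, List.map_map,
      Function.comp_def]

lemma exists_coe_eq {S : Type*} [AddCommSemigroup S] (a : S) (m : WithZero S) :
    ∃ s : S, (s : WithZero S) = (a : WithZero S) + m := by
  induction m with
  | zero => exact ⟨a, by simp⟩
  | coe m => exact ⟨a + m, by rw [WithZero.coe_add]⟩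

/-- The image coloring argument for Hales–Jewett. `f : Fin n → ℕ → S` are the sequences,
`b ∈ S`, `E : Fin r → S` enumerates the finite set `{t_1,…,t_r}`, and `N` is at least the
Hales–Jewett number `HJ(r,n)`, expressed by saying that every `r`-coloring of `[n]^N`
admits a monochromatic combinatorial line. -/
theorem image_coloring_halesJewett {S : Type*} [AddCommSemigroup S]
    (n N r : ℕ) (f : Fin n → ℕ → S) (A : Set S) (b : S) (E : Fin r → S)
    (hN : ∀ χ : (Fin N → Fin n) → Fin r,
      ∃ l : Combinatorics.Line (Fin n) (Fin N), ∃ c : Fin r, ∀ x : Fin n, χ (l x) = c)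
    (hb : ∀ a : Fin N → Fin n, ∃ j : Fin r,
      E j + addChain b (List.ofFn fun i : Fin N => f (a i) (i.val + 1)) ∈ A) :
    ∃ s : S, ∃ H : Finset ℕ, H.Nonempty ∧ H ⊆ Finset.Icc 1 N ∧
      ∀ i : Fin n, s + finSum (f i) H ∈ A := by
  classical
  rcases Nat.eq_zero_or_pos n with hn | hn
  · -- degenerate case: no colors, conclusion vacuous, but we still need `s` and `H`
    subst hn
    rcases Nat.eq_zero_or_pos N with hN0 | hN0
    · subst hN0
      obtain ⟨j, -⟩ := hb Fin.elim0
      obtain ⟨l, -, -⟩ := hN (fun _ => j)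
      obtain ⟨i, -⟩ := l.proper
      exact i.elim0
    · refine ⟨b, {1}, ⟨1, by simp⟩, ?_, fun i => i.elim0⟩
      simp only [Finset.singleton_subset_iff, Finset.mem_Icc]
      omega
  · set χ : (Fin N → Fin n) → Fin r := fun a => (hb a).choose with hχdef
    have hχ : ∀ a, E (χ a) + addChain b (List.ofFn fun i : Fin N => f (a i) (i.val + 1)) ∈ A :=
      fun a => (hb a).choose_spec
    obtain ⟨l, c, hc⟩ := hN χ
    set x₀ : Fin n := ⟨0, hn⟩
    set v : Fin N → Fin n := fun i => (l.idxFun i).getD x₀ with hv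
    set V : Finset (Fin N) := Finset.univ.filter (fun i => l.idxFun i = none) with hVdef
    have hVne : V.Nonempty := by
      obtain ⟨i, hi⟩ := l.proper
      exact ⟨i, by simp [hVdef, hi]⟩
    obtain ⟨s, hs⟩ := exists_coe_eq (E c)
      ((b : WithZero S) + ∑ i ∈ Finset.univ.filter (fun i : Fin N => ¬ l.idxFun i = none),
        ((f (v i) (i.val + 1) : S) : WithZero S))
    have hinj : Set.InjOn (fun i : Fin N => i.val + 1) V := by
      intro a _ c _ h
      exact Fin.ext (by simpa using h)
    refine ⟨s, V.image (fun i => i.val + 1), hVne.image _, ?_, ?_⟩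
    · intro t ht
      simp only [Finset.mem_image] at ht
      obtain ⟨i, -, rfl⟩ := ht
      simp only [Finset.mem_Icc]
      omega
    · intro x
      have key : s + finSum (f x) (V.image (fun i => i.val + 1)) =
          E (χ (l x)) + addChain b (List.ofFn fun i : Fin N => f (l x i) (i.val + 1)) := by
        apply WithZero.coe_inj.mp
        rw [WithZero.coe_add, WithZero.coe_add, addChain_coe,
          finSum_coe _ _ (hVne.image _), hs, hc x,
          Finset.sum_image (fun a ha c hc h => hinj ha hc h)]
        have hofn : ((List.ofFn fun i : Fin N => f (l x i) (i.val + 1)).map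
            (fun y : S => (y : WithZero S))).sum
            = ∑ i : Fin N, ((f (l x i) (i.val + 1) : S) : WithZero S) := by
          rw [List.map_ofFn, List.sum_ofFn]
          rfl
        rw [hofn,
          ← Finset.sum_filter_add_sum_filter_not Finset.univ (fun i : Fin N => l.idxFun i = none)]
        have h1 : ∑ i ∈ Finset.univ.filter (fun i : Fin N => l.idxFun i = none),
            ((f (l x i) (i.val + 1) : S) : WithZero S)
            = ∑ i ∈ V, ((f x (i.val + 1) : S) : WithZero S) := by
          apply Finset.sum_congr rfl
          intro i hi
          simp only [hVdef, Finset.mem_filter] at hi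
          rw [Combinatorics.Line.coe_apply, hi.2]
          rfl
        have h2 : ∑ i ∈ Finset.univ.filter (fun i : Fin N => ¬ l.idxFun i = none),
            ((f (l x i) (i.val + 1) : S) : WithZero S)
            = ∑ i ∈ Finset.univ.filter (fun i : Fin N => ¬ l.idxFun i = none),
            ((f (v i) (i.val + 1) : S) : WithZero S) := by
          apply Finset.sum_congr rfl
          intro i hi
          simp only [Finset.mem_filter] at hi
          rcases h : l.idxFun i with _ | a
          · exact absurd h hi.2
          · rw [Combinatorics.Line.coe_apply, h, hv]
            simp [h]
        rw [h1, h2]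
        abel
      rw [key]
      exact hχ (l x)
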